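/- Let K be a field of characteristic zero, let D be a finite-dimensional central division K-algebra, and let L be a maximal subfield of D. Regard D as a module over L ⊗[K] L via (l ⊗ l') • d = l·d·l' (multiplication in D). Then D is a free (L ⊗[K] L)-module of rank one; equivalently, D is isomorphic to L ⊗[K] L as an L-bimodule. -/

import Mathlib

open TensorProduct

/-- Right multiplication along an embedding `f : L → D` of a commutative algebra into `D`,
as a `K`-algebra homomorphism `L → End_K(D)`. -/
noncomputable def rightMulAlgHom (K L D : Type) [Field K] [CommRing L] [Ring D]
    [Algebra K L] [Algebra K D] (f : L →ₐ[K] D) : L →ₐ[K] Module.End K D where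
  toFun l := LinearMap.mulRight K (f l)
  map_one' := by ext d; simp
  map_mul' l₁ l₂ := by
    ext d
    show d * f (l₁ * l₂) = d * f l₂ * f l₁
    rw [mul_comm l₁ l₂, map_mul, ← mul_assoc]
  map_zero' := by ext d; simp
  map_add' l₁ l₂ := by ext d; simp [mul_add]
  commutes' c := by
    ext d
    show d * f (algebraMap K L c) = (algebraMap K (Module.End K D) c) d
    rw [AlgHom.commutes, Module.algebraMap_end_eq_smul_id]
    simp [Algebra.smul_def, ← Algebra.commutes c d]

/-- The `K`-algebra homomorphism `L ⊗[K] L → End_K(D)` sending `l ⊗ l'` to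
`x ↦ f l * x * f l'`. -/
noncomputable def bimulAlgHom (K L D : Type) [Field K] [CommRing L] [Ring D]
    [Algebra K L] [Algebra K D] (f : L →ₐ[K] D) : (L ⊗[K] L) →ₐ[K] Module.End K D :=
  Algebra.TensorProduct.lift ((Algebra.lmul K D).comp f) (rightMulAlgHom K L D f)
    (fun x y => by
      show _ = _
      ext d
      show f x * (d * f y) = (f x * d) * f y
      rw [mul_assoc])


theorem artin_indep {K D : Type} [Field K] [DivisionRing D] [Algebra K D]
    (hcentral : Subalgebra.center K D = ⊥) {η : Type} {b : η → D}
    (hb : LinearIndependent K b) (s : Finset η) :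
    ∀ a : η → D, (∀ d : D, ∑ i ∈ s, a i * d * b i = 0) → ∀ i ∈ s, a i = 0 := by
  classical
  induction s using Finset.strongInduction with
  | _ s IH =>
  intro a h
  by_contra hcon
  push_neg at hcon
  obtain ⟨i₀, hi₀s, hi₀⟩ := hcon
  set a' : η → D := fun i => (a i₀)⁻¹ * a i with ha'
  have ha'i₀ : a' i₀ = 1 := inv_mul_cancel₀ hi₀
  have h' : ∀ d : D, ∑ i ∈ s, a' i * d * b i = 0 := by
    intro d
    have : ∑ i ∈ s, a' i * d * b i = (a i₀)⁻¹ * ∑ i ∈ s, a i * d * b i := by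
      rw [Finset.mul_sum]
      exact Finset.sum_congr rfl fun i _ => by simp [ha', mul_assoc]
    rw [this, h d, mul_zero]
  -- every a' i is central
  have hcomm : ∀ i ∈ s, ∀ c : D, a' i * c = c * a' i := by
    intro i his c
    by_cases hii : i = i₀
    · subst hii; rw [ha'i₀, one_mul, mul_one]
    · have hsub : s.erase i₀ ⊂ s := Finset.erase_ssubset hi₀s
      have hzero : ∀ d : D, ∑ j ∈ s.erase i₀, (a' j * c - c * a' j) * d * b j = 0 := by
        intro d
        have hs : ∑ j ∈ s, (a' j * c - c * a' j) * d * b j = 0 := by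
          have e1 := h' (c * d)
          have e2 := h' d
          have : ∑ j ∈ s, (a' j * c - c * a' j) * d * b j
              = ∑ j ∈ s, a' j * (c * d) * b j - c * ∑ j ∈ s, a' j * d * b j := by
            rw [Finset.mul_sum, ← Finset.sum_sub_distrib]
            exact Finset.sum_congr rfl fun j _ => by simp [sub_mul, mul_assoc]
          rw [this, e1, e2, mul_zero, sub_zero]
        have h0 : (a' i₀ * c - c * a' i₀) * d * b i₀ = 0 := by
          rw [ha'i₀, one_mul, mul_one, sub_self, zero_mul, zero_mul]
        rw [← Finset.sum_erase s h0] at hs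
        exact hs
      have := IH _ hsub (fun j => a' j * c - c * a' j) hzero i (Finset.mem_erase.mpr ⟨hii, his⟩)
      exact sub_eq_zero.mp this
  have hcentr : ∀ i ∈ s, ∃ k : K, algebraMap K D k = a' i := by
    intro i his
    have : a' i ∈ Subalgebra.center K D :=
      Subalgebra.mem_center_iff.mpr fun g => (hcomm i his g).symm
    rw [hcentral] at this
    exact Algebra.mem_bot.mp this
  choose! k hk using hcentr
  have hsum : ∑ i ∈ s, k i • b i = 0 := by
    have := h' 1
    calc ∑ i ∈ s, k i • b i = ∑ i ∈ s, a' i * 1 * b i := by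
          refine Finset.sum_congr rfl fun i his => ?_
          rw [← hk i his, mul_one, Algebra.smul_def]
      _ = 0 := this
  have hki₀ : k i₀ = 0 := linearIndependent_iff'.mp hb s k hsum i₀ hi₀s
  have : a' i₀ = 0 := by rw [← hk i₀ hi₀s, hki₀, map_zero]
  rw [ha'i₀] at this
  simp at this
theorem bimulAlgHom_injective {K L D : Type} [Field K] [Field L] [DivisionRing D]
    [Algebra K L] [Algebra K D] [FiniteDimensional K L]
    (hcentral : Subalgebra.center K D = ⊥) (ι : L →ₐ[K] D) :
    Function.Injective (bimulAlgHom K L D ι) := by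
  classical
  set m := Module.finrank K L with hm
  set b : Module.Basis (Fin m) K L := Module.finBasis K L with hbb
  -- the bilinear components
  set B : Fin m → (L →ₗ[K] L →ₗ[K] D) := fun j => LinearMap.mk₂ K
      (fun l mm => b.repr mm j • ι l)
      (fun l l' mm => by simp [map_add, smul_add])
      (fun c l mm => by show (b.repr mm) j • ι (c • l) = c • ((b.repr mm) j • ι l); rw [map_smul, smul_comm])
      (fun l mm mm' => by simp [map_add, add_smul])
      (fun c l mm => by simp [map_smul, mul_smul]) with hB
  set E : (L ⊗[K] L) →ₗ[K] (Fin m → D) :=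
    LinearMap.pi (fun j => TensorProduct.lift (B j)) with hE
  have hEtmul : ∀ (l mm : L) (j : Fin m), E (l ⊗ₜ[K] mm) j = b.repr mm j • ι l := by
    intro l mm j
    simp [hE, hB]
  -- a left inverse up to rTensor
  set G : (Fin m → D) →ₗ[K] (D ⊗[K] L) :=
    ∑ j : Fin m, ((TensorProduct.mk K D L).flip (b j)).comp (LinearMap.proj j) with hG
  have hGapp : ∀ c : Fin m → D, G c = ∑ j : Fin m, c j ⊗ₜ[K] b j := by
    intro c; simp [hG]
  have hGE : ∀ x : L ⊗[K] L, G (E x) = LinearMap.rTensor L ι.toLinearMap x := by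
    intro x
    induction x using TensorProduct.induction_on with
    | zero => simp
    | tmul l mm =>
      rw [hGapp]
      have : ∑ j : Fin m, E (l ⊗ₜ[K] mm) j ⊗ₜ[K] b j = ι l ⊗ₜ[K] mm := by
        calc ∑ j : Fin m, E (l ⊗ₜ[K] mm) j ⊗ₜ[K] b j
            = ∑ j : Fin m, ι l ⊗ₜ[K] (b.repr mm j • b j) := by
              refine Finset.sum_congr rfl fun j _ => ?_
              rw [hEtmul, TensorProduct.smul_tmul, TensorProduct.tmul_smul]
          _ = ι l ⊗ₜ[K] mm := by
              rw [← TensorProduct.tmul_sum, b.sum_repr]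
      rw [this, LinearMap.rTensor_tmul]; rfl
    | add x y hx hy => rw [map_add, map_add, map_add, hx, hy]
  have hEinj : Function.Injective E := by
    have h1 : Function.Injective (LinearMap.rTensor L ι.toLinearMap) :=
      Module.Flat.rTensor_preserves_injective_linearMap ι.toLinearMap ι.injective
    intro x y hxy
    apply h1
    rw [← hGE, ← hGE, hxy]
  have hkey : ∀ (x : L ⊗[K] L) (d : D),
      bimulAlgHom K L D ι x d = ∑ j : Fin m, E x j * d * ι (b j) := by
    intro x d
    induction x using TensorProduct.induction_on with
    | zero => simp
    | tmul l mm =>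
      have h1 : bimulAlgHom K L D ι (l ⊗ₜ[K] mm) d = ι l * (d * ι mm) := by
        rw [bimulAlgHom, Algebra.TensorProduct.lift_tmul]
        rfl
      rw [h1, ← mul_assoc]
      calc ι l * d * ι mm
          = (ι l * d) * ∑ j : Fin m, b.repr mm j • ι (b j) := by
            have : ∑ j : Fin m, b.repr mm j • ι (b j) = ι mm := by
              have := congrArg ι (b.sum_repr mm)
              rw [map_sum] at this
              simpa [map_smul] using this
            rw [this]
        _ = ∑ j : Fin m, b.repr mm j • (ι l * d * ι (b j)) := by
            rw [Finset.mul_sum]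
            exact Finset.sum_congr rfl fun j _ => mul_smul_comm _ _ _
        _ = ∑ j : Fin m, E (l ⊗ₜ[K] mm) j * d * ι (b j) := by
            refine Finset.sum_congr rfl fun j _ => ?_
            rw [hEtmul, smul_mul_assoc, smul_mul_assoc]
    | add x y hx hy =>
      rw [map_add, LinearMap.add_apply, hx, hy, ← Finset.sum_add_distrib]
      refine Finset.sum_congr rfl fun j _ => ?_
      rw [map_add]
      simp [add_mul]
  -- conclude injectivity
  have hker : ∀ x : L ⊗[K] L, bimulAlgHom K L D ι x = 0 → x = 0 := by
    intro x hx
    have hzero : ∀ d : D, ∑ j ∈ Finset.univ, E x j * d * ι (b j) = 0 := by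
      intro d
      rw [← hkey x d, hx]
      rfl
    have hbD : LinearIndependent K (fun j => ι (b j)) :=
      b.linearIndependent.map' ι.toLinearMap (LinearMap.ker_eq_bot.mpr ι.injective)
    have hcomp : ∀ j ∈ Finset.univ, E x j = 0 :=
      artin_indep hcentral hbD Finset.univ (fun j => E x j) hzero
    have : E x = 0 := funext fun j => hcomp j (Finset.mem_univ j)
    have := hEinj (this.trans (map_zero E).symm)
    exact this
  exact (injective_iff_map_eq_zero _).mpr hker

theorem finrank_le_sq {K L D : Type} [Field K] [Field L] [DivisionRing D]
    [Algebra K L] [Algebra K D] [FiniteDimensional K D] (ι : L →ₐ[K] D)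
    (hmax : Subalgebra.centralizer K (ι.range : Set D) = ι.range) :
    Module.finrank K D ≤ Module.finrank K L * Module.finrank K L := by
  classical
  letI instL : Module L D :=
  { smul := fun l d => d * ι l
    one_smul := fun d => by show d * ι 1 = d; rw [map_one, mul_one]
    mul_smul := fun l l' d => by
      show d * ι (l * l') = (d * ι l') * ι l
      rw [mul_comm l l', map_mul, mul_assoc]
    smul_zero := fun l => zero_mul _
    smul_add := fun l d d' => add_mul _ _ _
    add_smul := fun l l' d => by show d * ι (l + l') = d * ι l + d * ι l'; rw [map_add, mul_add]
    zero_smul := fun d => by show d * ι 0 = 0; rw [map_zero, mul_zero] }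
  have smul_def : ∀ (l : L) (d : D), l • d = d * ι l := fun _ _ => rfl
  letI : IsScalarTower K L D := ⟨fun k l d => by
    show d * ι (k • l) = k • (d * ι l)
    rw [map_smul, mul_smul_comm]⟩
  letI : SMulCommClass L K D := ⟨fun l k d => by
    show (k • d) * ι l = k • (d * ι l)
    rw [smul_mul_assoc]⟩
  haveI : FiniteDimensional L D := FiniteDimensional.right K L D
  -- the evaluation algebra map D ⊗ L → End_L D
  set Θ : (D ⊗[K] L) →ₗ[K] (D →ₗ[L] D) := TensorProduct.lift (LinearMap.mk₂ K
    (fun d l =>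
      { toFun := fun x => d * x * ι l
        map_add' := fun x y => by
          show d * (x + y) * ι l = d * x * ι l + d * y * ι l
          rw [mul_add, add_mul]
        map_smul' := fun l' x => by
          show d * (x * ι l') * ι l = (d * x * ι l) * ι l'
          have hc : ι l' * ι l = ι l * ι l' := by rw [← map_mul, ← map_mul, mul_comm]
          simp only [mul_assoc]
          rw [hc] })
    (fun d d' l => by
      apply LinearMap.ext; intro x
      show (d + d') * x * ι l = d * x * ι l + d' * x * ι l
      rw [add_mul, add_mul])
    (fun k d l => by
      apply LinearMap.ext; intro x
      show (k • d) * x * ι l = k • (d * x * ι l)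
      rw [smul_mul_assoc, smul_mul_assoc])
    (fun d l l' => by
      apply LinearMap.ext; intro x
      show d * x * ι (l + l') = d * x * ι l + d * x * ι l'
      rw [map_add, mul_add])
    (fun k d l => by
      apply LinearMap.ext; intro x
      show d * x * ι (k • l) = k • (d * x * ι l)
      rw [map_smul, mul_smul_comm])) with hΘ
  have hΘtmul : ∀ (d : D) (l : L) (x : D), Θ (d ⊗ₜ[K] l) x = d * x * ι l := by
    intro d l x; rw [hΘ, TensorProduct.lift.tmul]; rfl
  have key1 : ∀ (d : D) (y : D ⊗[K] L) (x : D),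
      Θ (LinearMap.rTensor L (LinearMap.mulLeft K d) y) x = d * Θ y x := by
    intro d y x
    induction y using TensorProduct.induction_on with
    | zero => simp
    | tmul d' l => rw [LinearMap.rTensor_tmul, hΘtmul, hΘtmul, LinearMap.mulLeft_apply,
        mul_assoc, mul_assoc, mul_assoc]
    | add y z hy hz => simp only [map_add, LinearMap.add_apply, hy, hz, mul_add]
  have key2 : ∀ (l : L) (y : D ⊗[K] L) (x : D),
      Θ (LinearMap.lTensor D (Algebra.lmul K L l) y) x = Θ y x * ι l := by
    intro l y x
    induction y using TensorProduct.induction_on with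
    | zero => simp
    | tmul d l' =>
      rw [LinearMap.lTensor_tmul, hΘtmul, hΘtmul]
      show d * x * ι (l * l') = d * x * ι l' * ι l
      rw [mul_comm l l', map_mul, ← mul_assoc]
    | add y z hy hz => simp only [map_add, LinearMap.add_apply, hy, hz, add_mul]
  -- interpolation via Jacobson-density-style induction
  have interp : ∀ (r : ℕ) (v : Fin r → D), LinearIndependent L v → ∀ w : Fin r → D,
      ∃ y : D ⊗[K] L, ∀ i, Θ y (v i) = w i := by
    intro r
    induction r with
    | zero => exact fun v _ w => ⟨0, fun i => i.elim0⟩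
    | succ r IH =>
      intro v hv w
      have hv' : LinearIndependent L (fun i : Fin r => v i.castSucc) :=
        hv.comp Fin.castSucc (Fin.castSucc_injective r)
      have claimA : ∃ y₀ : D ⊗[K] L, (∀ i : Fin r, Θ y₀ (v i.castSucc) = 0) ∧
          Θ y₀ (v (Fin.last r)) ≠ 0 := by
        by_contra hA
        push_neg at hA
        have hker : ∀ y y' : D ⊗[K] L,
            (∀ i : Fin r, Θ y (v i.castSucc) = Θ y' (v i.castSucc)) →
            Θ y (v (Fin.last r)) = Θ y' (v (Fin.last r)) := by
          intro y y' hyy'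
          have h0 : ∀ i : Fin r, Θ (y - y') (v i.castSucc) = 0 := by
            intro i; rw [map_sub, LinearMap.sub_apply, hyy' i, sub_self]
          have := hA (y - y') h0
          rw [map_sub, LinearMap.sub_apply] at this
          exact sub_eq_zero.mp this
        choose Y hY using fun ww : Fin r → D => IH (fun i => v i.castSucc) hv' ww
        set ε : Fin r → D → D := fun j x => Θ (Y (Pi.single j x)) (v (Fin.last r)) with hεdef
        have hεleft : ∀ (j : Fin r) (d x : D), ε j (d * x) = d * ε j x := by
          intro j d x
          have h1 : ∀ i : Fin r,
              Θ (LinearMap.rTensor L (LinearMap.mulLeft K d) (Y (Pi.single j x))) (v i.castSucc)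
              = Θ (Y (Pi.single j (d * x))) (v i.castSucc) := by
            intro i
            rw [key1, hY, hY]
            by_cases hij : i = j
            · subst hij; rw [Pi.single_eq_same, Pi.single_eq_same]
            · rw [Pi.single_eq_of_ne hij, Pi.single_eq_of_ne hij, mul_zero]
          have h2 := hker _ _ h1
          rw [key1] at h2
          exact h2.symm
        have hεright : ∀ (j : Fin r) (l : L) (x : D), ε j (x * ι l) = ε j x * ι l := by
          intro j l x
          have h1 : ∀ i : Fin r,
              Θ (LinearMap.lTensor D (Algebra.lmul K L l) (Y (Pi.single j x))) (v i.castSucc)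
              = Θ (Y (Pi.single j (x * ι l))) (v i.castSucc) := by
            intro i
            rw [key2, hY, hY]
            by_cases hij : i = j
            · subst hij; rw [Pi.single_eq_same, Pi.single_eq_same]
            · rw [Pi.single_eq_of_ne hij, Pi.single_eq_of_ne hij, zero_mul]
          have h2 := hker _ _ h1
          rw [key2] at h2
          exact h2.symm
        have hεone : ∀ (j : Fin r) (x : D), ε j x = x * ε j 1 := by
          intro j x; have := hεleft j x 1; rwa [mul_one] at this
        have hcj : ∀ j : Fin r, ε j 1 ∈ Subalgebra.centralizer K (ι.range : Set D) := by
          intro j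
          rw [Subalgebra.mem_centralizer_iff]
          intro g hg
          obtain ⟨l, rfl⟩ : ∃ l, ι l = g := hg
          have h1 : ε j (ι l) = ι l * ε j 1 := hεone j (ι l)
          have h2 : ε j (ι l) = ε j 1 * ι l := by
            have := hεright j l 1; rwa [one_mul] at this
          rw [← h1]; exact h2
        have hlj : ∀ j : Fin r, ∃ l : L, ι l = ε j 1 := by
          intro j
          have := hcj j
          rw [hmax] at this
          exact this
        choose lj hlj using hlj
        have hSv : ∀ i : Fin r,
            Θ (∑ j : Fin r, Y (Pi.single j (v j.castSucc))) (v i.castSucc) = v i.castSucc := by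
          intro i
          rw [map_sum, LinearMap.sum_apply]
          calc ∑ j : Fin r, Θ (Y (Pi.single j (v j.castSucc))) (v i.castSucc)
              = ∑ j : Fin r, Pi.single j (v j.castSucc) i :=
                Finset.sum_congr rfl fun j _ => by rw [hY]
            _ = v i.castSucc := by
                rw [Finset.sum_pi_single]
                simp
        have hidv : ∀ i : Fin r, Θ ((1 : D) ⊗ₜ[K] (1 : L)) (v i.castSucc)
            = Θ (∑ j : Fin r, Y (Pi.single j (v j.castSucc))) (v i.castSucc) := by
          intro i
          rw [hSv, hΘtmul, map_one, mul_one, one_mul]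
        have hlast := hker _ _ hidv
        have hvlast : v (Fin.last r) = ∑ j : Fin r, (lj j) • v j.castSucc := by
          have hL : Θ ((1 : D) ⊗ₜ[K] (1 : L)) (v (Fin.last r)) = v (Fin.last r) := by
            rw [hΘtmul, map_one, mul_one, one_mul]
          have hR : Θ (∑ j : Fin r, Y (Pi.single j (v j.castSucc))) (v (Fin.last r))
              = ∑ j : Fin r, (lj j) • v j.castSucc := by
            rw [map_sum, LinearMap.sum_apply]
            refine Finset.sum_congr rfl fun j _ => ?_
            have e1 : Θ (Y (Pi.single j (v j.castSucc))) (v (Fin.last r))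
                = ε j (v j.castSucc) := rfl
            rw [e1, hεone, ← hlj j]
            rfl
          rw [← hL, hlast, hR]
        have hdep : ∑ i : Fin (r+1), ((Fin.snoc lj (-1) : Fin (r+1) → L) i) • v i = 0 := by
          rw [Fin.sum_univ_castSucc]
          have e1 : ∀ j : Fin r, ((Fin.snoc lj (-1) : Fin (r+1) → L) j.castSucc) • v j.castSucc
              = (lj j) • v j.castSucc := fun j => by rw [Fin.snoc_castSucc]
          have e2 : ((Fin.snoc lj (-1) : Fin (r+1) → L) (Fin.last r)) • v (Fin.last r)
              = -v (Fin.last r) := by rw [Fin.snoc_last, neg_smul, one_smul]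
          rw [Finset.sum_congr rfl fun j _ => e1 j, e2, hvlast, add_neg_cancel]
        have := Fintype.linearIndependent_iff.mp hv _ hdep (Fin.last r)
        rw [Fin.snoc_last] at this
        exact one_ne_zero (neg_eq_zero.mp this)
      obtain ⟨y₀, hy₀, hu⟩ := claimA
      obtain ⟨y₁, hy₁⟩ := IH (fun i => v i.castSucc) hv' (fun i => w i.castSucc)
      refine ⟨y₁ + LinearMap.rTensor L (LinearMap.mulLeft K
        ((w (Fin.last r) - Θ y₁ (v (Fin.last r))) * (Θ y₀ (v (Fin.last r)))⁻¹)) y₀, ?_⟩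
      intro i
      rw [map_add, LinearMap.add_apply, key1]
      induction i using Fin.lastCases with
      | last => rw [inv_mul_cancel_right₀ hu, add_comm, sub_add_cancel]
      | cast i => rw [hy₀ i, mul_zero, add_zero, hy₁ i]
  haveI : FiniteDimensional K L := FiniteDimensional.of_injective ι.toLinearMap ι.injective
  -- surjectivity of Θ onto End_L(D)
  set bD : Module.Basis (Fin (Module.finrank L D)) L D := Module.finBasis L D with hbD
  have hsurj : Function.Surjective Θ := by
    intro f
    obtain ⟨y, hy⟩ := interp _ bD bD.linearIndependent (fun i => f (bD i))
    exact ⟨y, bD.ext hy⟩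
  -- dimension count
  have h1 : Module.finrank K (D →ₗ[L] D) ≤ Module.finrank K (D ⊗[K] L) := by
    calc Module.finrank K (D →ₗ[L] D)
        = Module.finrank K (⊤ : Submodule K (D →ₗ[L] D)) := (finrank_top K _).symm
      _ = Module.finrank K (LinearMap.range Θ) := by
          rw [LinearMap.range_eq_top.mpr hsurj]
      _ ≤ Module.finrank K (D ⊗[K] L) := Θ.finrank_range_le
  have h2 : Module.finrank K (D →ₗ[L] D) = Module.finrank L D * Module.finrank K D :=
    Module.finrank_linearMap L K D D
  have h3 : Module.finrank K (D ⊗[K] L) = Module.finrank K D * Module.finrank K L :=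
    Module.finrank_tensorProduct
  have h4 : Module.finrank K L * Module.finrank L D = Module.finrank K D :=
    Module.finrank_mul_finrank K L D
  have hDpos : 0 < Module.finrank K D := Module.finrank_pos
  have hle : Module.finrank L D ≤ Module.finrank K L := by
    rw [h2, h3] at h1
    rw [mul_comm] at h1
    exact Nat.le_of_mul_le_mul_left h1 hDpos
  calc Module.finrank K D = Module.finrank K L * Module.finrank L D := h4.symm
    _ ≤ Module.finrank K L * Module.finrank K L := Nat.mul_le_mul_left _ hle

theorem exists_ker_toSpanSingleton_eq_bot (A M : Type) [CommRing A] [IsSemisimpleRing A]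
    [IsArtinianRing A] [AddCommGroup M] [Module A M]
    (hfaith : ∀ a : A, (∀ x : M, a • x = 0) → a = 0) :
    ∃ m : M, LinearMap.ker (LinearMap.toSpanSingleton A M m) = ⊥ := by
  classical
  obtain ⟨I₀, hI₀S, hmin⟩ := IsArtinian.set_has_minimal
    (Set.range fun m : M => LinearMap.ker (LinearMap.toSpanSingleton A M m))
    ⟨_, ⟨(0 : M), rfl⟩⟩
  obtain ⟨m₀, rfl⟩ := hI₀S
  by_cases hbot : LinearMap.ker (LinearMap.toSpanSingleton A M m₀) = ⊥
  · exact ⟨m₀, hbot⟩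
  exfalso
  set I : Submodule A A := LinearMap.ker (LinearMap.toSpanSingleton A M m₀) with hI
  have hmem : ∀ (a : A) (m : M), a ∈ LinearMap.ker (LinearMap.toSpanSingleton A M m) ↔ a • m = 0 := by
    intro a m
    rw [LinearMap.mem_ker, LinearMap.toSpanSingleton_apply]
  obtain ⟨J, hJ⟩ := exists_isCompl I
  have h1 : (1 : A) ∈ I ⊔ J := by rw [hJ.sup_eq_top]; trivial
  obtain ⟨e, he, f, hf, hef⟩ := Submodule.mem_sup.mp h1
  have hef0 : e * f = 0 := by
    have hIJ : e * f ∈ I ⊓ J := by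
      constructor
      · have := I.smul_mem f he
        rwa [smul_eq_mul, mul_comm] at this
      · have := J.smul_mem e hf
        rwa [smul_eq_mul] at this
    rw [hJ.inf_eq_bot] at hIJ
    exact hIJ
  have hee : e * e = e := by
    have : e * (e + f) = e := by rw [hef, mul_one]
    rwa [mul_add, hef0, add_zero] at this
  have he0 : e ≠ 0 := by
    rintro rfl
    rw [zero_add] at hef
    subst hef
    have hJtop : J = ⊤ := Submodule.eq_top_iff'.mpr fun a => by
      have := J.smul_mem a hf
      rwa [smul_eq_mul, mul_one] at this
    have : I = ⊥ := by rw [← hJ.inf_eq_bot, hJtop, inf_top_eq]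
    exact hbot this
  obtain ⟨m', hm'⟩ : ∃ m' : M, e • m' ≠ 0 := by
    by_contra hc
    push_neg at hc
    exact he0 (hfaith e hc)
  set m₁ : M := m₀ + e • m' with hm₁
  have hlt : LinearMap.ker (LinearMap.toSpanSingleton A M m₁) < I := by
    constructor
    · intro a ha
      have ha' : a • m₀ + (a * e) • m' = 0 := by
        have := (hmem a m₁).mp ha
        rwa [hm₁, smul_add, smul_smul] at this
      have hae : (a * e) • m' = 0 := by
        have h3 := congrArg (fun x : M => e • x) ha'
        simp only [smul_add, smul_smul, smul_zero] at h3
        have h4 : (e * a) • m₀ = 0 := by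
          rw [mul_comm, ← smul_smul, (hmem e m₀).mp he, smul_zero]
        rw [h4, zero_add] at h3
        have h5 : e * (a * e) = a * e := by
          rw [← mul_assoc, mul_comm e a, mul_assoc, hee]
        rwa [h5] at h3
      have hm0 : a • m₀ = 0 := by rwa [hae, add_zero] at ha'
      exact (hmem a m₀).mpr hm0
    · intro hle
      have h6 : e • m₁ = 0 := (hmem e m₁).mp (hle he)
      rw [hm₁, smul_add, smul_smul, hee] at h6
      rw [(hmem e m₀).mp he, zero_add] at h6
      exact hm' h6
  exact hmin _ ⟨m₁, rfl⟩ hlt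

/-- Let `K` be a field of characteristic zero, `D` a finite-dimensional central division
`K`-algebra and `L` a maximal subfield of `D`, i.e. a field extension of `K` embedded in
`D` by `ι` whose image is a commutative subalgebra equal to its own centralizer.  Regard
`D` as a module over `L ⊗[K] L` via `(l ⊗ l') • d = ι l * d * ι l'`.  Then `D` is a free
`(L ⊗[K] L)`-module of rank one, i.e. `D ≅ L ⊗[K] L` as an `L`-bimodule. -/
theorem division_algebra_free_over_subfield_env (K L D : Type) [Field K] [CharZero K]
    [DivisionRing D] [Algebra K D] [FiniteDimensional K D]
    (hcentral : Subalgebra.center K D = ⊥)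
    [Field L] [Algebra K L] (ι : L →ₐ[K] D)
    (hmax : Subalgebra.centralizer K (ι.range : Set D) = ι.range) :
    letI : Module (L ⊗[K] L) D := Module.compHom D (bimulAlgHom K L D ι).toRingHom
    Nonempty (D ≃ₗ[L ⊗[K] L] (L ⊗[K] L)) := by
  classical
  haveI : FiniteDimensional K L := FiniteDimensional.of_injective ι.toLinearMap ι.injective
  haveI : Algebra.IsAlgebraic K L := Algebra.IsAlgebraic.of_finite K L
  haveI : Algebra.FormallyUnramified K L := Algebra.FormallyUnramified.of_isSeparable K L
  haveI : Algebra.FormallyUnramified K (L ⊗[K] L) :=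
    Algebra.FormallyUnramified.comp K L (L ⊗[K] L)
  haveI : IsReduced (L ⊗[K] L) := Algebra.FormallyUnramified.isReduced_of_field K (L ⊗[K] L)
  haveI : IsArtinianRing (L ⊗[K] L) := isArtinian_of_tower K inferInstance
  haveI : IsSemisimpleRing (L ⊗[K] L) := IsArtinianRing.isSemisimpleRing_of_isReduced (R := L ⊗[K] L)
  letI : Module (L ⊗[K] L) D := Module.compHom D (bimulAlgHom K L D ι).toRingHom
  have hsmul : ∀ (x : L ⊗[K] L) (d : D), x • d = bimulAlgHom K L D ι x d := fun _ _ => rfl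
  have hinj := bimulAlgHom_injective hcentral ι
  have hfaith : ∀ a : L ⊗[K] L, (∀ x : D, a • x = 0) → a = 0 := by
    intro a ha
    have h0 : bimulAlgHom K L D ι a = 0 := LinearMap.ext fun d => by rw [← hsmul]; exact ha d
    exact (injective_iff_map_eq_zero _).mp hinj a h0
  obtain ⟨d₀, hd₀⟩ := exists_ker_toSpanSingleton_eq_bot (L ⊗[K] L) D hfaith
  set ψ := LinearMap.toSpanSingleton (L ⊗[K] L) D d₀ with hψ
  have hψinj : Function.Injective ψ := LinearMap.ker_eq_bot.mp hd₀
  set ψK : (L ⊗[K] L) →ₗ[K] D :=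
    { toFun := fun a => a • d₀
      map_add' := fun a b => add_smul a b d₀
      map_smul' := fun k a => by
        show (k • a) • d₀ = k • (a • d₀)
        have h1 : bimulAlgHom K L D ι (k • a) = k • bimulAlgHom K L D ι a := by
          have := map_smul (bimulAlgHom K L D ι).toLinearMap k a
          simpa using this
        rw [hsmul, hsmul, h1, LinearMap.smul_apply] } with hψK
  have hψKinj : Function.Injective ψK := by
    intro a b h
    apply hψinj
    rw [hψ, LinearMap.toSpanSingleton_apply, LinearMap.toSpanSingleton_apply]
    exact h
  have hrank : Module.finrank K (L ⊗[K] L) = Module.finrank K D := by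
    have h1 : Module.finrank K (L ⊗[K] L) = Module.finrank K L * Module.finrank K L :=
      Module.finrank_tensorProduct
    have h2 := finrank_le_sq ι hmax
    have h3 := LinearMap.finrank_le_finrank_of_injective hψKinj
    omega
  have hψKsurj : Function.Surjective ψK :=
    (LinearMap.injective_iff_surjective_of_finrank_eq_finrank hrank).mp hψKinj
  have hψsurj : Function.Surjective ψ := by
    intro d
    obtain ⟨a, ha⟩ := hψKsurj d
    exact ⟨a, by rw [hψ, LinearMap.toSpanSingleton_apply]; exact ha⟩
  exact ⟨(LinearEquiv.ofBijective ψ ⟨hψinj, hψsurj⟩).symm⟩
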